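/- For any fixed proper coloring structure: the set of proper colorings of a signed graph Σ is the disjoint union over acyclic orientations P of Σ of the sets C(P) of colorings preserving P; every proper coloring preserves a unique acyclic orientation. -/
import Mathlib


/-- A signed graph with vertex set `V` and edge set `E`. -/
structure SignedGraph (V : Type*) (E : Type*) where
  fst : E → V
  snd : E → V
  sgn : E → Bool

variable {V E : Type*}

/-- An orientation of a signed graph is encoded by `o : E → Bool`.  For a positive
edge `e : uv`, `o e = true` means the edge is directed `u → v`.  For a negative edge,
`o e = true` means both arrows point toward the endpoints, `o e = false` that both
point away.  `coverStep G o` is the induced arc relation on the (oriented) covering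
graph, whose vertices are pairs `(s, x) : Bool × V` (with `(true, x) = +x` and
`(false, x) = -x`). -/
def coverStep (G : SignedGraph V E) (o : E → Bool) : (Bool × V) → (Bool × V) → Prop :=
  fun z z' => ∃ e : E,
    if G.sgn e then
      (o e = true ∧ ((z = (true, G.fst e) ∧ z' = (true, G.snd e)) ∨
                     (z = (false, G.snd e) ∧ z' = (false, G.fst e)))) ∨
      (o e = false ∧ ((z = (true, G.snd e) ∧ z' = (true, G.fst e)) ∨
                      (z = (false, G.fst e) ∧ z' = (false, G.snd e))))
    else
      (o e = true ∧ ((z = (false, G.snd e) ∧ z' = (true, G.fst e)) ∨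
                     (z = (false, G.fst e) ∧ z' = (true, G.snd e)))) ∨
      (o e = false ∧ ((z = (true, G.fst e) ∧ z' = (false, G.snd e)) ∨
                      (z = (true, G.snd e) ∧ z' = (false, G.fst e))))

/-- An orientation is acyclic when the induced orientation of the covering graph has
no directed cycle. -/
def IsAcyclicOrientation (G : SignedGraph V E) (o : E → Bool) : Prop :=
  ∀ z : Bool × V, ¬ Relation.TransGen (coverStep G o) z z

/-- A coloring `κ` preserves an orientation `o` when, in the induced coloring of the
covering graph (`+x ↦ κ x`, `-x ↦ -κ x`), every arc points from a smaller color to a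
larger color. -/
def Preserves (G : SignedGraph V E) (κ : V → ℤ) (o : E → Bool) : Prop :=
  ∀ z z' : Bool × V, coverStep G o z z' →
    (if z.1 then κ z.2 else -κ z.2) < (if z'.1 then κ z'.2 else -κ z'.2)

/-- A coloring is proper iff `κ(u) ≠ sgn(e)·κ(v)` for every edge `e : uv`. -/
def Proper (G : SignedGraph V E) (κ : V → ℤ) : Prop :=
  ∀ e : E, κ (G.fst e) ≠ (if G.sgn e then κ (G.snd e) else -κ (G.snd e))

lemma acyclic_of_preserves (G : SignedGraph V E) (κ : V → ℤ) (o : E → Bool)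
    (hp : Preserves G κ o) : IsAcyclicOrientation G o := by
  intro z hz
  have key : ∀ a b : Bool × V, Relation.TransGen (coverStep G o) a b →
      (if a.1 then κ a.2 else -κ a.2) < (if b.1 then κ b.2 else -κ b.2) := by
    intro a b h
    induction h with
    | single h => exact hp _ _ h
    | tail _ h2 ih => exact ih.trans (hp _ _ h2)
  exact absurd (key z z hz) (lt_irrefl _)


/-- Every proper coloring of a signed graph preserves a unique acyclic orientation;
hence the set of proper colorings is the disjoint union, over acyclic orientations
`P`, of the sets `C(P)` of colorings preserving `P`. -/
theorem stmt12 (G : SignedGraph V E) (κ : V → ℤ) (hκ : Proper G κ) :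
    ∃! o : E → Bool, IsAcyclicOrientation G o ∧ Preserves G κ o := by
  classical
  set o : E → Bool := fun e => if G.sgn e then decide (κ (G.fst e) < κ (G.snd e))
      else decide (0 < κ (G.fst e) + κ (G.snd e)) with ho
  have hpres : Preserves G κ o := by
    rintro z z' ⟨e, h⟩
    have hprop := hκ e
    by_cases hs : G.sgn e <;> simp [hs, ho] at h hprop <;>
      rcases h with ⟨h1, (⟨hz, hz'⟩ | ⟨hz, hz'⟩)⟩ | ⟨h1, (⟨hz, hz'⟩ | ⟨hz, hz'⟩)⟩ <;>
      subst hz <;> subst hz' <;> simp_all <;> omega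
  refine ⟨o, ⟨acyclic_of_preserves G κ o hpres, hpres⟩, ?_⟩
  rintro o' ⟨-, hp'⟩
  funext e
  have hprop := hκ e
  by_cases hs : G.sgn e <;> simp [hs] at hprop
  · rcases Bool.eq_false_or_eq_true (o' e) with hb | hb
    · have := hp' (true, G.fst e) (true, G.snd e) ⟨e, by simp [hs, hb]⟩
      simp at this
      simp [ho, hs, hb]
      omega
    · have := hp' (true, G.snd e) (true, G.fst e) ⟨e, by simp [hs, hb]⟩
      simp at this
      simp [ho, hs, hb]
      omega
  · rcases Bool.eq_false_or_eq_true (o' e) with hb | hb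
    · have := hp' (false, G.fst e) (true, G.snd e) ⟨e, by simp [hs, hb]⟩
      simp at this
      simp [ho, hs, hb]
      omega
    · have := hp' (true, G.fst e) (false, G.snd e) ⟨e, by simp [hs, hb]⟩
      simp at this
      simp [ho, hs, hb]
      omega
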